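/- Let s ≥ 1 and let (A, b) be a symmetric s-stage Runge–Kutta tableau: b_j = b_{s+1−j} and a_{ij} + a_{s+1−i, s+1−j} = b_j for all i, j. Let c_i = Σ_j a_{ij}, assume the c_i are distinct and Σ_i b_i c_i^{k−1} = 1/k for k = 1, …, s, and let b₁, b₂ ∈ ℝ^s satisfy Σ_i (b₁)_i (2c_i)^{k−1} = 1/k and Σ_i (b₂)_i (2c_i − 1)^{k−1} = 1/k for k = 1, …, s. Define A₁ = 2A, c₁ = 2c, and A₂ = 2A − 𝟙b₁ᵀ, c₂ = 2c − 𝟙. Then the tableau (A₂, c₂, b₂) is the adjoint of the tableau (A₁, c₁, b₁): (b₂)_j = (b₁)_{s+1−j}, (A₂)_{ij} = (b₁)_{s+1−j} − (A₁)_{s+1−i, s+1−j} for all i, j, and (c₂)_i = 1 − (c₁)_{s+1−i} for all i. -/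

import Mathlib

open Finset

/-- Binomial identity: ∑ₖ aᵏ(-1)^(m-k) C(m,k)/(m-k+1) = (a^(m+1)-(a-1)^(m+1))/(m+1). -/
lemma binom_aux12 (a : ℝ) (m : ℕ) :
    ∑ k ∈ range (m + 1), a ^ k * (-1 : ℝ) ^ (m - k) * (m.choose k : ℝ) / (((m - k : ℕ) : ℝ) + 1)
      = (a ^ (m + 1) - (a - 1) ^ (m + 1)) / ((m : ℝ) + 1) := by
  have key : ∀ k ∈ range (m + 1),
      a ^ k * (-1 : ℝ) ^ (m - k) * (m.choose k : ℝ) / (((m - k : ℕ) : ℝ) + 1)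
        = a ^ k * (-1 : ℝ) ^ (m - k) * ((m + 1).choose k : ℝ) / ((m : ℝ) + 1) := by
    intro k hk
    have hkm : k ≤ m := Nat.lt_succ_iff.mp (mem_range.mp hk)
    have hnat : (m + 1) * m.choose k = (m + 1).choose k * (m - k + 1) := by
      have h1 := Nat.add_one_mul_choose_eq m (m - k)
      rw [Nat.choose_symm hkm] at h1
      have h2 : (m + 1).choose (m - k + 1) = (m + 1).choose k := by
        have : m - k + 1 = (m + 1) - k := by omega
        rw [this, Nat.choose_symm (by omega)]
      rw [h2] at h1
      simpa [Nat.succ_eq_add_one] using h1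
    have hcast : ((m : ℝ) + 1) * (m.choose k : ℝ) = ((m + 1).choose k : ℝ) * (((m - k : ℕ) : ℝ) + 1) := by
      exact_mod_cast congrArg (Nat.cast : ℕ → ℝ) hnat
    have hd1 : (((m - k : ℕ) : ℝ) + 1) ≠ 0 := by positivity
    have hd2 : ((m : ℝ) + 1) ≠ 0 := by positivity
    rw [div_eq_div_iff hd1 hd2]
    linear_combination (a ^ k * (-1 : ℝ) ^ (m - k)) * hcast
  rw [sum_congr rfl key]
  have hbin : (a - 1) ^ (m + 1)
      = ∑ k ∈ range (m + 2), a ^ k * (-1 : ℝ) ^ (m + 1 - k) * ((m + 1).choose k : ℝ) := by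
    have := add_pow a (-1 : ℝ) (m + 1)
    rw [sub_eq_add_neg, this]
  have hsplit : ∑ k ∈ range (m + 2), a ^ k * (-1 : ℝ) ^ (m + 1 - k) * ((m + 1).choose k : ℝ)
      = (∑ k ∈ range (m + 1), a ^ k * (-1 : ℝ) ^ (m + 1 - k) * ((m + 1).choose k : ℝ))
        + a ^ (m + 1) := by
    rw [sum_range_succ]; simp
  have hneg : ∀ k ∈ range (m + 1),
      a ^ k * (-1 : ℝ) ^ (m + 1 - k) * ((m + 1).choose k : ℝ)
        = -(a ^ k * (-1 : ℝ) ^ (m - k) * ((m + 1).choose k : ℝ)) := by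
    intro k hk
    have hkm : k ≤ m := Nat.lt_succ_iff.mp (mem_range.mp hk)
    have : m + 1 - k = (m - k) + 1 := by omega
    rw [this, pow_succ]
    ring
  have hsum : ∑ k ∈ range (m + 1), a ^ k * (-1 : ℝ) ^ (m - k) * ((m + 1).choose k : ℝ)
      = a ^ (m + 1) - (a - 1) ^ (m + 1) := by
    rw [hbin, hsplit, sum_congr rfl hneg, Finset.sum_neg_distrib]
    ring
  rw [← sum_div, hsum]

/-- Quadrature: if w integrates monomials exactly on [0,1] up to degree s-1,
then it integrates (a - x)^m exactly. -/
lemma quad12 {s : ℕ} (x w : Fin s → ℝ)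
    (hm : ∀ m : ℕ, m < s → ∑ i, w i * x i ^ m = 1 / ((m : ℝ) + 1))
    (a : ℝ) (m : ℕ) (hms : m < s) :
    ∑ i, w i * (a - x i) ^ m = (a ^ (m + 1) - (a - 1) ^ (m + 1)) / ((m : ℝ) + 1) := by
  have expand : ∀ i : Fin s, (a - x i) ^ m
      = ∑ k ∈ range (m + 1), a ^ k * (-1 : ℝ) ^ (m - k) * (m.choose k : ℝ) * x i ^ (m - k) := by
    intro i
    rw [sub_eq_add_neg, add_pow]
    refine sum_congr rfl fun k _ => ?_
    rw [neg_pow]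
    ring
  calc ∑ i, w i * (a - x i) ^ m
      = ∑ k ∈ range (m + 1), a ^ k * (-1 : ℝ) ^ (m - k) * (m.choose k : ℝ)
          * ∑ i, w i * x i ^ (m - k) := by
        simp only [expand, mul_sum]
        rw [sum_comm]
        exact sum_congr rfl fun k _ => sum_congr rfl fun i _ => by ring
    _ = ∑ k ∈ range (m + 1),
          a ^ k * (-1 : ℝ) ^ (m - k) * (m.choose k : ℝ) / (((m - k : ℕ) : ℝ) + 1) := by
        refine sum_congr rfl fun k _ => ?_
        rw [hm (m - k) (lt_of_le_of_lt (Nat.sub_le m k) hms)]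
        ring
    _ = _ := binom_aux12 a m

theorem stmt12 {s : ℕ} (hs : 1 ≤ s) (A : Fin s → Fin s → ℝ) (b : Fin s → ℝ)
    (hbsym : ∀ j, b j = b j.rev)
    (hAsym : ∀ i j, A i j + A i.rev j.rev = b j)
    (c : Fin s → ℝ) (hc : ∀ i, c i = ∑ j, A i j) (hcinj : Function.Injective c)
    (hb : ∀ k : ℕ, 1 ≤ k → k ≤ s → ∑ i, b i * c i ^ (k - 1) = 1 / (k : ℝ))
    (b1 b2 : Fin s → ℝ)
    (hb1 : ∀ k : ℕ, 1 ≤ k → k ≤ s → ∑ i, b1 i * (2 * c i) ^ (k - 1) = 1 / (k : ℝ))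
    (hb2 : ∀ k : ℕ, 1 ≤ k → k ≤ s → ∑ i, b2 i * (2 * c i - 1) ^ (k - 1) = 1 / (k : ℝ)) :
    (∀ j, b2 j = b1 j.rev) ∧
    (∀ i j, 2 * A i j - b1 j = b1 j.rev - 2 * A i.rev j.rev) ∧
    (∀ i, 2 * c i - 1 = 1 - 2 * c i.rev) := by
  -- reformulate moment conditions
  have hb' : ∀ m : ℕ, m < s → ∑ i, b i * c i ^ m = 1 / ((m : ℝ) + 1) := by
    intro m hm
    have := hb (m + 1) (by omega) (by omega)
    simpa using this
  have hb1' : ∀ m : ℕ, m < s → ∑ i, b1 i * (2 * c i) ^ m = 1 / ((m : ℝ) + 1) := by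
    intro m hm
    have := hb1 (m + 1) (by omega) (by omega)
    simpa using this
  have hb2' : ∀ m : ℕ, m < s → ∑ i, b2 i * (2 * c i - 1) ^ m = 1 / ((m : ℝ) + 1) := by
    intro m hm
    have := hb2 (m + 1) (by omega) (by omega)
    simpa using this
  -- sum of weights is 1
  have hbsum : ∑ j, b j = 1 := by
    have := hb' 0 (by omega)
    simpa using this
  -- c i + c i.rev = 1
  have hcrev : ∀ i, c i + c i.rev = 1 := by
    intro i
    have h1 : ∑ j : Fin s, A i.rev j.rev = ∑ j : Fin s, A i.rev j :=
      Equiv.sum_comp (Fin.revPerm) (fun j => A i.rev j)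
    have h2 : ∑ j, (A i j + A i.rev j.rev) = ∑ j, b j :=
      sum_congr rfl fun j _ => hAsym i j
    rw [sum_add_distrib, h1, hbsum] at h2
    rw [hc i, hc i.rev]
    exact h2
  have hthird : ∀ i, 2 * c i - 1 = 1 - 2 * c i.rev := by
    intro i; have := hcrev i; linarith
  -- injectivity of the node maps
  have hx2inj : Function.Injective (fun i => 2 * c i - 1) := by
    intro i j h
    exact hcinj (by dsimp at h; linarith)
  have hy2inj : Function.Injective (fun i => 2 * c i) := by
    intro i j h
    exact hcinj (by dsimp at h; linarith)
  -- moments of b1 ∘ rev against nodes (2c - 1)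
  have hrevmom : ∀ m : ℕ, m < s →
      ∑ j, b1 j.rev * (2 * c j - 1) ^ m = 1 / ((m : ℝ) + 1) := by
    intro m hm
    have h1 : ∑ j, b1 j.rev * (2 * c j - 1) ^ m
        = ∑ j, b1 j * (2 * c j.rev - 1) ^ m :=
      Fintype.sum_equiv (Fin.revPerm) (fun j : Fin s => b1 j.rev * (2 * c j - 1) ^ m)
        (fun j : Fin s => b1 j * (2 * c j.rev - 1) ^ m) (fun j => by simp [Fin.rev_rev])
    have h2 : ∀ j : Fin s, (2 * c j.rev - 1) ^ m = (1 - 2 * c j) ^ m := by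
      intro j; have := hcrev j; congr 1; linarith
    rw [h1, sum_congr rfl fun j _ => by rw [h2 j]]
    have := quad12 (fun i => 2 * c i) b1 hb1' 1 m hm
    simpa using this
  -- first claim
  have claim1 : ∀ j, b2 j = b1 j.rev := by
    have hz : (fun j => b2 j - b1 j.rev) = 0 := by
      apply Matrix.eq_zero_of_forall_pow_sum_mul_pow_eq_zero
        (f := fun i => 2 * c i - 1) hx2inj
      intro m
      have h1 := hb2' (m : ℕ) m.isLt
      have h2 := hrevmom (m : ℕ) m.isLt
      have : ∑ j, (b2 j - b1 j.rev) * (2 * c j - 1) ^ (m : ℕ)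
          = (∑ j, b2 j * (2 * c j - 1) ^ (m : ℕ))
            - ∑ j, b1 j.rev * (2 * c j - 1) ^ (m : ℕ) := by
        rw [← sum_sub_distrib]; exact sum_congr rfl fun j _ => by ring
      rw [this, h1, h2]; ring
    intro j
    have := congrFun hz j
    dsimp at this; linarith
  -- moments of b1 ∘ rev against nodes 2c
  have hrevmom2 : ∀ m : ℕ, m < s →
      ∑ j, b1 j.rev * (2 * c j) ^ m = (2 ^ (m + 1) - 1) / ((m : ℝ) + 1) := by
    intro m hm
    have h1 : ∑ j, b1 j.rev * (2 * c j) ^ m = ∑ j, b1 j * (2 * c j.rev) ^ m :=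
      Fintype.sum_equiv (Fin.revPerm) (fun j : Fin s => b1 j.rev * (2 * c j) ^ m)
        (fun j : Fin s => b1 j * (2 * c j.rev) ^ m) (fun j => by simp [Fin.rev_rev])
    have h2 : ∀ j : Fin s, (2 * c j.rev) ^ m = (2 - 2 * c j) ^ m := by
      intro j; have := hcrev j; congr 1; linarith
    have h := quad12 (fun i => 2 * c i) b1 hb1' 2 m hm
    norm_num at h
    rw [h1, sum_congr rfl fun j _ => by rw [h2 j]]
    exact h
  -- second claim: b1 j + b1 j.rev = 2 * b j
  have claim2 : ∀ j, b1 j + b1 j.rev = 2 * b j := by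
    have hz : (fun j => b1 j + b1 j.rev - 2 * b j) = 0 := by
      apply Matrix.eq_zero_of_forall_pow_sum_mul_pow_eq_zero
        (f := fun i => 2 * c i) hy2inj
      intro m
      have h1 := hb1' (m : ℕ) m.isLt
      have h2 := hrevmom2 (m : ℕ) m.isLt
      have h3 : ∑ j, 2 * b j * (2 * c j) ^ (m : ℕ)
          = 2 ^ ((m : ℕ) + 1) * ∑ j, b j * c j ^ (m : ℕ) := by
        rw [mul_sum]
        refine sum_congr rfl fun j _ => ?_
        rw [mul_pow, pow_succ]
        ring
      rw [hb' (m : ℕ) m.isLt] at h3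
      have hsplit : ∑ j, (b1 j + b1 j.rev - 2 * b j) * (2 * c j) ^ (m : ℕ)
          = (∑ j, b1 j * (2 * c j) ^ (m : ℕ))
            + (∑ j, b1 j.rev * (2 * c j) ^ (m : ℕ))
            - ∑ j, 2 * b j * (2 * c j) ^ (m : ℕ) := by
        rw [← sum_add_distrib, ← sum_sub_distrib]
        exact sum_congr rfl fun j _ => by ring
      rw [hsplit, h1, h2, h3]
      have hd : ((m : ℕ) : ℝ) + 1 ≠ 0 := by positivity
      field_simp
      ring
    intro j
    have := congrFun hz j
    dsimp at this; linarith
  refine ⟨claim1, fun i j => ?_, hthird⟩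
  have h1 := hAsym i j
  have h2 := claim2 j
  linarith
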